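/- For every α ∈ ℝ there exist T ∈ (−∞, ∞], and differentiable functions a₊, a₋, β₂, β₃ : (−∞, T) → ℝ with a₊(t) > 0 for all t, satisfying the ODE system a₊' = 4a₊a₋, a₋' = 2(a₊ + a₋ − 16)a₋, β₂' = −(a₋ + 4β₃)β₂, β₃' = 4β₃² + 2a₋β₃ + 4a₋, such that a₋(t) = a₊(t) + 4α·√(a₊(t)) + 16 for all t, and as t → −∞ one has a₊(t) → 0, a₋(t) → 16, β₂(t) → 1, and β₃(t) → −4. -/

import Mathlib

open Filter Set intervalIntegral

namespace Stmt5

/-- Power series coefficients of the analytic solution `Z`. -/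
noncomputable def cc (α : ℝ) : ℕ → ℝ
  | 0 => 1
  | 1 => -α / 16
  | (n+2) => -(4*α*(2*(n:ℝ)+3)^2 * cc α (n+1) + (2*(n:ℝ)+1)*(2*(n:ℝ)+3) * cc α n)
      / (64*((n:ℝ)+2)^2)

lemma cc_rec (α : ℝ) (n : ℕ) :
    64*((n:ℝ)+2)^2 * cc α (n+2) + 4*α*(2*(n:ℝ)+3)^2 * cc α (n+1)
      + (2*(n:ℝ)+1)*(2*(n:ℝ)+3) * cc α n = 0 := by
  have h2 : ((n:ℝ)+2) ≠ 0 := by positivity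
  rw [show n + 2 = (n+1)+1 from rfl, show n + 1 + 1 = n + 2 from rfl]
  rw [cc]
  field_simp
  ring

lemma cc_bound (α : ℝ) : ∀ n, |cc α n| ≤ (|α|+1) ^ n := by
  have hK1 : (1:ℝ) ≤ |α|+1 := by linarith [abs_nonneg α]
  have hKa : |α| ≤ |α|+1 := by linarith
  intro n
  induction n using Nat.twoStepInduction with
  | zero => simp [cc]
  | one =>
    simp only [cc, pow_one]
    rw [abs_div, abs_neg]
    rw [abs_of_pos (by norm_num : (0:ℝ) < 16)]
    linarith [abs_nonneg α]
  | more n ih1 ih2 =>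
    set K := |α|+1 with hK
    have hKpos : (0:ℝ) < K := by positivity
    rw [cc]
    have hden : |(64*((n:ℝ)+2)^2)| = 64*((n:ℝ)+2)^2 := by
      rw [abs_of_pos]; positivity
    rw [abs_div, abs_neg, hden]
    rw [div_le_iff₀ (by positivity)]
    have e1 : |4*α*(2*(n:ℝ)+3)^2 * cc α (n+1)| ≤ 4*K*(2*(n:ℝ)+3)^2 * K^(n+1) := by
      rw [abs_mul]
      apply mul_le_mul _ ih2 (abs_nonneg _) (by positivity)
      rw [abs_mul, abs_mul]
      have : |(2*(n:ℝ)+3)^2| = (2*(n:ℝ)+3)^2 := by rw [abs_of_pos]; positivity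
      rw [this, abs_of_pos (by norm_num : (0:ℝ)<4)]
      have : |α| ≤ K := hKa
      nlinarith [sq_nonneg (2*(n:ℝ)+3), abs_nonneg α]
    have e2 : |(2*(n:ℝ)+1)*(2*(n:ℝ)+3) * cc α n| ≤ (2*(n:ℝ)+1)*(2*(n:ℝ)+3) * K^n := by
      rw [abs_mul]
      apply mul_le_mul _ ih1 (abs_nonneg _) (by positivity)
      rw [abs_mul]
      have h1 : |(2*(n:ℝ)+1)| = 2*(n:ℝ)+1 := by rw [abs_of_pos]; positivity
      have h3 : |(2*(n:ℝ)+3)| = 2*(n:ℝ)+3 := by rw [abs_of_pos]; positivity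
      rw [h1, h3]
    calc |4*α*(2*(n:ℝ)+3)^2 * cc α (n+1) + (2*(n:ℝ)+1)*(2*(n:ℝ)+3) * cc α n|
        ≤ |4*α*(2*(n:ℝ)+3)^2 * cc α (n+1)| + |(2*(n:ℝ)+1)*(2*(n:ℝ)+3) * cc α n| :=
          abs_add_le _ _
      _ ≤ 4*K*(2*(n:ℝ)+3)^2 * K^(n+1) + (2*(n:ℝ)+1)*(2*(n:ℝ)+3) * K^n := by linarith
      _ ≤ K^(n+2) * (64*((n:ℝ)+2)^2) := by
          have h23 : (2*(n:ℝ)+3)^2 ≤ 4*((n:ℝ)+2)^2 := by nlinarith [Nat.cast_nonneg (α := ℝ) n]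
          have h13 : (2*(n:ℝ)+1)*(2*(n:ℝ)+3) ≤ 4*((n:ℝ)+2)^2 := by
            nlinarith [Nat.cast_nonneg (α := ℝ) n]
          have c0 : (0:ℝ) ≤ 4*K^(n+2) := by positivity
          have t1 := mul_le_mul_of_nonneg_right h23 c0
          have t2 := mul_le_mul_of_nonneg_right h13 (pow_nonneg hKpos.le n)
          have t3 : ((4:ℝ)*((n:ℝ)+2)^2)*K^n ≤ ((4:ℝ)*((n:ℝ)+2)^2)*K^(n+2) := by
            apply mul_le_mul_of_nonneg_left (pow_le_pow_right₀ hK1 (by omega)) (by positivity)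
          have e3 : 4*K*(2*(n:ℝ)+3)^2*K^(n+1) = (2*(n:ℝ)+3)^2 * (4*K^(n+2)) := by ring
          have hnn : (0:ℝ) ≤ ((n:ℝ)+2)^2*K^(n+2) := by positivity
          nlinarith [t1, t2, t3]



lemma cc_zero (α : ℝ) : cc α 0 = 1 := rfl
lemma cc_one (α : ℝ) : cc α 1 = -α/16 := rfl
lemma summable_sq_geom : Summable (fun n : ℕ => ((n:ℝ)+2)^2 * (1/2)^n) := by
  have h2 := summable_pow_mul_geometric_of_norm_lt_one (R := ℝ) 2
    (r := 1/2) (by rw [Real.norm_eq_abs, abs_of_pos (by norm_num : (0:ℝ) < 1/2)]; norm_num)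
  have h1 := summable_pow_mul_geometric_of_norm_lt_one (R := ℝ) 1
    (r := 1/2) (by rw [Real.norm_eq_abs, abs_of_pos (by norm_num : (0:ℝ) < 1/2)]; norm_num)
  have h0 := summable_pow_mul_geometric_of_norm_lt_one (R := ℝ) 0
    (r := 1/2) (by rw [Real.norm_eq_abs, abs_of_pos (by norm_num : (0:ℝ) < 1/2)]; norm_num)
  apply (h2.add ((h1.mul_left 4).add (h0.mul_left 4))).congr
  intro n; push_cast; ring

lemma summable_of_bound {f : ℕ → ℝ} {C : ℝ}
    (h : ∀ n, |f n| ≤ C * (((n:ℝ)+2)^2 * (1/2)^n)) : Summable f := by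
  apply Summable.of_norm
  exact Summable.of_nonneg_of_le (fun n => norm_nonneg _) (fun n => h n)
    (summable_sq_geom.mul_left C)

lemma abs_cc_le (α : ℝ) {x : ℝ} (hx : |x| * (|α|+1) ≤ 1/2) {k : ℕ} (hk : k ≤ 2) (n : ℕ) :
    |cc α (n+k)| * |x|^n ≤ (|α|+1)^2 * (1/2)^n := by
  have hK1 : (1:ℝ) ≤ |α|+1 := by linarith [abs_nonneg α]
  have h1 : |cc α (n+k)| ≤ (|α|+1)^(n+k) := cc_bound α _
  have h2 : (|α|+1)^(n+k) ≤ (|α|+1)^(n+2) := pow_le_pow_right₀ hK1 (by omega)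
  have h5 : ((|α|+1)*|x|)^n ≤ (1/2)^n := by
    apply pow_le_pow_left₀ (by positivity) (by linarith [mul_comm (|α|+1) |x|])
  calc |cc α (n+k)| * |x|^n ≤ (|α|+1)^(n+2) * |x|^n := by
        apply mul_le_mul_of_nonneg_right (h1.trans h2) (by positivity)
    _ = (|α|+1)^2 * ((|α|+1)*|x|)^n := by rw [mul_pow]; ring
    _ ≤ (|α|+1)^2 * (1/2)^n := by
        apply mul_le_mul_of_nonneg_left h5 (by positivity)

lemma summable_main (α : ℝ) {x : ℝ} (hx : |x| * (|α|+1) ≤ 1/2) (g : ℕ → ℝ)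
    (hg : ∀ n, |g n| ≤ 4*((n:ℝ)+2)^2) {k : ℕ} (hk : k ≤ 2) :
    Summable (fun n => g n * cc α (n+k) * x^n) := by
  apply summable_of_bound (C := 4*(|α|+1)^2)
  intro n
  have : |g n * cc α (n+k) * x^n| = |g n| * (|cc α (n+k)| * |x|^n) := by
    rw [abs_mul, abs_mul, abs_pow, mul_assoc]
  rw [this]
  calc |g n| * (|cc α (n+k)| * |x|^n)
      ≤ (4*((n:ℝ)+2)^2) * ((|α|+1)^2 * (1/2)^n) := by
        apply mul_le_mul (hg n) (abs_cc_le α hx hk n) (by positivity) (by positivity)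
    _ = 4*(|α|+1)^2 * (((n:ℝ)+2)^2 * (1/2)^n) := by ring

noncomputable def Zf (α : ℝ) (x : ℝ) : ℝ := ∑' n : ℕ, cc α n * x^n
noncomputable def Df (α : ℝ) (x : ℝ) : ℝ := ∑' n : ℕ, ((n:ℝ)+1) * cc α (n+1) * x^n
noncomputable def Ef (α : ℝ) (x : ℝ) : ℝ :=
  ∑' n : ℕ, ((n:ℝ)+1) * ((n:ℝ)+2) * cc α (n+2) * x^n

section Sums
variable (α : ℝ) {x : ℝ}

lemma sumZ (hx : |x| * (|α|+1) ≤ 1/2) : Summable (fun n : ℕ => cc α n * x^n) := by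
  have := summable_main α hx (fun _ => 1) (fun n => by
    show |(1:ℝ)| ≤ _
    rw [abs_one]; nlinarith [Nat.cast_nonneg (α := ℝ) n]) (k := 0) (by norm_num)
  exact this.congr (fun n => by ring)

lemma sumD (hx : |x| * (|α|+1) ≤ 1/2) :
    Summable (fun n : ℕ => ((n:ℝ)+1) * cc α (n+1) * x^n) := by
  exact summable_main α hx (fun n => (n:ℝ)+1) (fun n => by
    rw [abs_of_pos (by positivity)]; beta_reduce; nlinarith [Nat.cast_nonneg (α := ℝ) n]) (k := 1) (by norm_num)

lemma sumE (hx : |x| * (|α|+1) ≤ 1/2) :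
    Summable (fun n : ℕ => ((n:ℝ)+1) * ((n:ℝ)+2) * cc α (n+2) * x^n) := by
  have := summable_main α hx (fun n => ((n:ℝ)+1)*((n:ℝ)+2)) (fun n => by
    rw [abs_of_pos (by positivity)]; beta_reduce; nlinarith [Nat.cast_nonneg (α := ℝ) n]) (k := 2) (by norm_num)
  exact this.congr (fun n => by ring)

lemma sumS2 (hx : |x| * (|α|+1) ≤ 1/2) :
    Summable (fun n : ℕ => (n:ℝ) * ((n:ℝ)+1) * cc α (n+1) * x^n) := by
  have := summable_main α hx (fun n => (n:ℝ)*((n:ℝ)+1)) (fun n => by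
    rw [abs_of_nonneg (by positivity)]; beta_reduce; nlinarith [Nat.cast_nonneg (α := ℝ) n]) (k := 1) (by norm_num)
  exact this.congr (fun n => by ring)

lemma sumS3 (hx : |x| * (|α|+1) ≤ 1/2) :
    Summable (fun n : ℕ => (n:ℝ) * cc α n * x^n) := by
  have := summable_main α hx (fun n => (n:ℝ)) (fun n => by
    rw [abs_of_nonneg (by positivity)]; beta_reduce; nlinarith [Nat.cast_nonneg (α := ℝ) n]) (k := 0) (by norm_num)
  exact this.congr (fun n => by ring)

lemma sumS4 (hx : |x| * (|α|+1) ≤ 1/2) :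
    Summable (fun n : ℕ => ((n:ℝ)-1) * (n:ℝ) * cc α n * x^n) := by
  have := summable_main α hx (fun n => ((n:ℝ)-1)*(n:ℝ)) (fun n => by
    show |((n:ℝ)-1)*(n:ℝ)| ≤ _
    have h0 : (0:ℝ) ≤ (n:ℝ) := Nat.cast_nonneg n
    rw [abs_mul]
    have h1 : |(n:ℝ)-1| ≤ (n:ℝ)+1 := by rw [abs_le]; constructor <;> linarith
    have h2 : |(n:ℝ)| = (n:ℝ) := abs_of_nonneg h0
    rw [h2]; nlinarith) (k := 0) (by norm_num)
  exact this.congr (fun n => by ring)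

lemma shiftS3 (hx : |x| * (|α|+1) ≤ 1/2) :
    ∑' n : ℕ, (n:ℝ) * cc α n * x^n = x * Df α x := by
  rw [Summable.tsum_eq_zero_add (sumS3 α hx)]
  rw [Df, ← tsum_mul_left]
  push_cast
  simp only [Nat.cast_zero, zero_mul, zero_add]
  exact tsum_congr fun n => by push_cast; ring

lemma shiftS2 (hx : |x| * (|α|+1) ≤ 1/2) :
    ∑' n : ℕ, (n:ℝ) * ((n:ℝ)+1) * cc α (n+1) * x^n = x * Ef α x := by
  rw [Summable.tsum_eq_zero_add (sumS2 α hx)]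
  rw [Ef, ← tsum_mul_left]
  simp only [Nat.cast_zero, zero_mul, zero_add]
  exact tsum_congr fun n => by push_cast; ring

lemma shiftS4 (hx : |x| * (|α|+1) ≤ 1/2) :
    ∑' n : ℕ, ((n:ℝ)-1) * (n:ℝ) * cc α n * x^n = x^2 * Ef α x := by
  have h1 : Summable (fun n : ℕ => (n:ℝ) * ((n:ℝ)+1) * cc α (n+1) * x^(n+1)) :=
    ((sumS2 α hx).mul_left x).congr (fun n => by ring)
  calc ∑' n : ℕ, ((n:ℝ)-1) * (n:ℝ) * cc α n * x^n
      = (((0:ℕ):ℝ)-1) * ((0:ℕ):ℝ) * cc α 0 * x^0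
        + ∑' n : ℕ, (((n+1:ℕ):ℝ)-1) * ((n+1:ℕ):ℝ) * cc α (n+1) * x^(n+1) :=
        Summable.tsum_eq_zero_add (sumS4 α hx)
    _ = ∑' n : ℕ, (n:ℝ) * ((n:ℝ)+1) * cc α (n+1) * x^(n+1) := by
        rw [show (((0:ℕ):ℝ)-1) * ((0:ℕ):ℝ) * cc α 0 * x^0 = 0 by push_cast; ring, zero_add]
        exact tsum_congr fun n => by push_cast; ring
    _ = ((0:ℕ):ℝ) * (((0:ℕ):ℝ)+1) * cc α (0+1) * x^(0+1)
        + ∑' n : ℕ, ((n+1:ℕ):ℝ) * (((n+1:ℕ):ℝ)+1) * cc α ((n+1)+1) * x^((n+1)+1) :=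
        Summable.tsum_eq_zero_add h1
    _ = ∑' n : ℕ, x^2 * (((n:ℝ)+1) * ((n:ℝ)+2) * cc α (n+2) * x^n) := by
        rw [show ((0:ℕ):ℝ) * (((0:ℕ):ℝ)+1) * cc α (0+1) * x^(0+1) = 0 by push_cast; ring, zero_add]
        exact tsum_congr fun n => by push_cast; ring
    _ = x^2 * Ef α x := by rw [tsum_mul_left]; rfl


lemma main_identity (hx : |x| * (|α|+1) ≤ 1/2) :
    4*x*(x^2+4*α*x+16) * Ef α x + (12*x^2+32*α*x+64) * Df α x
      + (3*x+4*α) * Zf α x = 0 := by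
  have hSZ := sumZ α hx
  have hSD := sumD α hx
  have hS2 := sumS2 α hx
  have hS3 := sumS3 α hx
  have hS4 := sumS4 α hx
  -- the A-series and B-series
  have hA : Summable (fun n : ℕ =>
      (64*((n:ℝ)+1)^2*cc α (n+1) + 4*α*(2*(n:ℝ)+1)^2*cc α n) * x^n) := by
    apply (((hSD.mul_left 64).add (hS2.mul_left 64)).add
      (((hS4.mul_left (16*α)).add (hS3.mul_left (32*α))).add (hSZ.mul_left (4*α)))).congr
    intro n; ring
  have hB : Summable (fun n : ℕ =>
      ((2*(n:ℝ)+1)*(2*(n:ℝ)+3)*cc α n) * x^(n+1)) := by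
    apply ((((hS4.mul_left 4).add (hS3.mul_left 12)).add (hSZ.mul_left 3)).mul_left x).congr
    intro n; ring
  have eA : ∑' n : ℕ, (64*((n:ℝ)+1)^2*cc α (n+1) + 4*α*(2*(n:ℝ)+1)^2*cc α n) * x^n
      = 64 * Df α x + 64*(x*Ef α x) + 16*α*(x^2*Ef α x) + 32*α*(x*Df α x)
        + 4*α*Zf α x := by
    have e0 : ∀ n : ℕ, (64*((n:ℝ)+1)^2*cc α (n+1) + 4*α*(2*(n:ℝ)+1)^2*cc α n) * x^n
        = 64*(((n:ℝ)+1) * cc α (n+1) * x^n) + 64*((n:ℝ) * ((n:ℝ)+1) * cc α (n+1) * x^n)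
          + (16*α*(((n:ℝ)-1) * (n:ℝ) * cc α n * x^n)
          + (32*α*((n:ℝ) * cc α n * x^n) + 4*α*(cc α n * x^n))) := by
      intro n; ring
    rw [tsum_congr e0]
    rw [Summable.tsum_add ((hSD.mul_left 64).add (hS2.mul_left 64))
      (((hS4.mul_left (16*α))).add ((hS3.mul_left (32*α)).add (hSZ.mul_left (4*α))))]
    rw [Summable.tsum_add (hSD.mul_left 64) (hS2.mul_left 64)]
    rw [Summable.tsum_add (hS4.mul_left (16*α)) ((hS3.mul_left (32*α)).add (hSZ.mul_left (4*α)))]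
    rw [Summable.tsum_add (hS3.mul_left (32*α)) (hSZ.mul_left (4*α))]
    rw [tsum_mul_left, tsum_mul_left, tsum_mul_left, tsum_mul_left, tsum_mul_left]
    rw [shiftS2 α hx, shiftS3 α hx, shiftS4 α hx]
    simp only [Df, Zf]
    ring
  have eB : ∑' n : ℕ, ((2*(n:ℝ)+1)*(2*(n:ℝ)+3)*cc α n) * x^(n+1)
      = x*(4*(x^2*Ef α x) + 12*(x*Df α x) + 3*Zf α x) := by
    have e0 : ∀ n : ℕ, ((2*(n:ℝ)+1)*(2*(n:ℝ)+3)*cc α n) * x^(n+1)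
        = x * (4*(((n:ℝ)-1) * (n:ℝ) * cc α n * x^n)
          + (12*((n:ℝ) * cc α n * x^n) + 3*(cc α n * x^n))) := by
      intro n; ring
    rw [tsum_congr e0, tsum_mul_left]
    rw [Summable.tsum_add (hS4.mul_left 4) ((hS3.mul_left 12).add (hSZ.mul_left 3))]
    rw [Summable.tsum_add (hS3.mul_left 12) (hSZ.mul_left 3)]
    rw [tsum_mul_left, tsum_mul_left, tsum_mul_left]
    rw [shiftS3 α hx, shiftS4 α hx]
    simp only [Zf]
    ring
  have eAB : ∑' n : ℕ, (64*((n:ℝ)+1)^2*cc α (n+1) + 4*α*(2*(n:ℝ)+1)^2*cc α n) * x^n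
      = - ∑' n : ℕ, ((2*(n:ℝ)+1)*(2*(n:ℝ)+3)*cc α n) * x^(n+1) := by
    calc ∑' n : ℕ, (64*((n:ℝ)+1)^2*cc α (n+1) + 4*α*(2*(n:ℝ)+1)^2*cc α n) * x^n
        = (64*(((0:ℕ):ℝ)+1)^2*cc α (0+1) + 4*α*(2*((0:ℕ):ℝ)+1)^2*cc α 0) * x^0
          + ∑' n : ℕ, (64*(((n+1:ℕ):ℝ)+1)^2*cc α ((n+1)+1)
            + 4*α*(2*((n+1:ℕ):ℝ)+1)^2*cc α (n+1)) * x^(n+1) := Summable.tsum_eq_zero_add hA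
      _ = ∑' n : ℕ, -(((2*(n:ℝ)+1)*(2*(n:ℝ)+3)*cc α n) * x^(n+1)) := by
          rw [show (64*(((0:ℕ):ℝ)+1)^2*cc α (0+1) + 4*α*(2*((0:ℕ):ℝ)+1)^2*cc α 0) * x^0
              = 0 by rw [cc_zero, cc_one]; push_cast; ring]
          rw [zero_add]
          apply tsum_congr
          intro n
          have hr := cc_rec α n
          have e1 : (64*(((n+1:ℕ):ℝ)+1)^2*cc α ((n+1)+1)
              + 4*α*(2*((n+1:ℕ):ℝ)+1)^2*cc α (n+1))
              = -((2*(n:ℝ)+1)*(2*(n:ℝ)+3)*cc α n) := by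
            push_cast
            push_cast at hr
            nlinarith [hr]
          rw [show (n+1)+1 = n+2 from rfl] at e1
          rw [show ((n+1)+1 : ℕ) = n+2 from rfl]
          rw [e1]
          ring
      _ = - ∑' n : ℕ, ((2*(n:ℝ)+1)*(2*(n:ℝ)+3)*cc α n) * x^(n+1) := by rw [tsum_neg]
  have h0 : (64 * Df α x + 64*(x*Ef α x) + 16*α*(x^2*Ef α x) + 32*α*(x*Df α x)
      + 4*α*Zf α x) + x*(4*(x^2*Ef α x) + 12*(x*Df α x) + 3*Zf α x) = 0 := by
    rw [← eA, ← eB, eAB]; ring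
  linear_combination h0

lemma Zf_zero : Zf α 0 = 1 := by
  rw [Zf]
  rw [tsum_eq_single 0 (fun n hn => by
    rw [zero_pow hn, mul_zero])]
  rw [pow_zero, cc_zero, mul_one]


lemma rK_pos : (0:ℝ) < (2*(|α|+1))⁻¹ := by positivity

lemma ball_bound {y : ℝ} (hy : y ∈ Metric.ball (0:ℝ) (2*(|α|+1))⁻¹) :
    |y| * (|α|+1) ≤ 1/2 := by
  rw [Metric.mem_ball, Real.dist_eq, sub_zero] at hy
  have hK : (0:ℝ) < |α|+1 := by positivity
  have := (mul_le_mul_of_nonneg_right hy.le hK.le)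
  calc |y| * (|α|+1) ≤ (2*(|α|+1))⁻¹ * (|α|+1) := this
    _ = 1/2 := by field_simp

lemma hasDerivAt_Zf {x : ℝ} (hx : x ∈ Metric.ball (0:ℝ) (2*(|α|+1))⁻¹) :
    HasDerivAt (Zf α) (Df α x) x := by
  have hK : (0:ℝ) < |α|+1 := by positivity
  have hu : Summable (fun n : ℕ => 8*(|α|+1)^2*(((n:ℝ)+2)^2*(1/2)^n)) :=
    summable_sq_geom.mul_left _
  have hbd : ∀ (n : ℕ) (y : ℝ), y ∈ Metric.ball (0:ℝ) (2*(|α|+1))⁻¹ →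
      ‖cc α n * ((n:ℝ) * y^(n-1))‖ ≤ 8*(|α|+1)^2*(((n:ℝ)+2)^2*(1/2)^n) := by
    intro n y hy
    have hy' := ball_bound α hy
    match n with
    | 0 => simp; positivity
    | (m+1) =>
      rw [Real.norm_eq_abs, abs_mul, abs_mul, abs_pow]
      have h1 : |cc α (m+1)| * |y|^m ≤ (|α|+1)^2 * (1/2)^m :=
        abs_cc_le α hy' (k := 1) (by norm_num) m
      have h2 : |((m+1:ℕ):ℝ)| = (m:ℝ)+1 := by
        rw [abs_of_nonneg (by positivity)]; push_cast; ring
      rw [show (m+1) - 1 = m from rfl, h2]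
      calc |cc α (m+1)| * (((m:ℝ)+1) * |y|^m)
          = ((m:ℝ)+1) * (|cc α (m+1)| * |y|^m) := by ring
        _ ≤ ((m:ℝ)+1) * ((|α|+1)^2 * (1/2)^m) := by
            apply mul_le_mul_of_nonneg_left h1 (by positivity)
        _ ≤ 8*(|α|+1)^2*((((m+1:ℕ):ℝ)+2)^2*(1/2)^(m+1)) := by
            push_cast
            have hle : (m:ℝ)+1 ≤ 4*((m:ℝ)+3)^2 := by nlinarith [Nat.cast_nonneg (α := ℝ) m]
            have hnn : (0:ℝ) ≤ (|α|+1)^2 * (1/2)^m := by positivity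
            calc ((m:ℝ)+1) * ((|α|+1)^2 * (1/2)^m)
                ≤ 4*((m:ℝ)+3)^2 * ((|α|+1)^2 * (1/2)^m) :=
                  mul_le_mul_of_nonneg_right hle hnn
              _ = 8*(|α|+1)^2*(((m:ℝ)+1+2)^2*((1/2)^m*(1/2))) := by ring
              _ = 8*(|α|+1)^2*(((m:ℝ)+1+2)^2*(1/2)^(m+1)) := by ring
  have hg0 : Summable (fun n : ℕ => cc α n * (0:ℝ)^n) :=
    sumZ α (by rw [abs_zero, zero_mul]; norm_num)
  have hder := hasDerivAt_tsum_of_isPreconnected hu Metric.isOpen_ball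
    (convex_ball (0:ℝ) _).isPreconnected
    (fun n y _ => HasDerivAt.const_mul (cc α n) (hasDerivAt_pow n y))
    hbd (Metric.mem_ball_self (rK_pos α)) hg0 hx
  have e1 : ∑' n : ℕ, cc α n * ((n:ℝ) * x^(n-1)) = Df α x := by
      have hs : Summable (fun n : ℕ => cc α n * ((n:ℝ) * x^(n-1))) := by
        apply Summable.of_norm_bounded hu (fun n => hbd n x hx)
      calc ∑' n : ℕ, cc α n * ((n:ℝ) * x^(n-1))
          = cc α 0 * (((0:ℕ):ℝ) * x^(0-1))
            + ∑' n : ℕ, cc α (n+1) * (((n+1:ℕ):ℝ) * x^((n+1)-1)) := Summable.tsum_eq_zero_add hs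
        _ = ∑' n : ℕ, ((n:ℝ)+1) * cc α (n+1) * x^n := by
            rw [show cc α 0 * (((0:ℕ):ℝ) * x^(0-1)) = 0 by push_cast; ring, zero_add]
            exact tsum_congr fun n => by push_cast; ring
        _ = Df α x := rfl
  rw [← e1]
  exact hder

lemma hasDerivAt_Df {x : ℝ} (hx : x ∈ Metric.ball (0:ℝ) (2*(|α|+1))⁻¹) :
    HasDerivAt (Df α) (Ef α x) x := by
  have hK : (0:ℝ) < |α|+1 := by positivity
  have hu : Summable (fun n : ℕ => 8*(|α|+1)^2*(((n:ℝ)+2)^2*(1/2)^n)) :=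
    summable_sq_geom.mul_left _
  have hbd : ∀ (n : ℕ) (y : ℝ), y ∈ Metric.ball (0:ℝ) (2*(|α|+1))⁻¹ →
      ‖((n:ℝ)+1) * cc α (n+1) * ((n:ℝ) * y^(n-1))‖
        ≤ 8*(|α|+1)^2*(((n:ℝ)+2)^2*(1/2)^n) := by
    intro n y hy
    have hy' := ball_bound α hy
    match n with
    | 0 => simp; positivity
    | (m+1) =>
      rw [Real.norm_eq_abs, abs_mul, abs_mul, abs_mul, abs_pow]
      have h1 : |cc α (m+2)| * |y|^m ≤ (|α|+1)^2 * (1/2)^m :=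
        abs_cc_le α hy' (k := 2) (by norm_num) m
      have h2 : |((m+1:ℕ):ℝ)| = (m:ℝ)+1 := by
        rw [abs_of_nonneg (by positivity)]; push_cast; ring
      have h3 : |((m+1:ℕ):ℝ)+1| = (m:ℝ)+2 := by
        rw [abs_of_nonneg (by positivity)]; push_cast; ring
      rw [show (m+1) - 1 = m from rfl, h2, h3, show (m+1)+1 = m+2 from rfl]
      calc ((m:ℝ)+2) * |cc α (m+2)| * (((m:ℝ)+1) * |y|^m)
          = ((m:ℝ)+2) * ((m:ℝ)+1) * (|cc α (m+2)| * |y|^m) := by ring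
        _ ≤ ((m:ℝ)+2) * ((m:ℝ)+1) * ((|α|+1)^2 * (1/2)^m) := by
            apply mul_le_mul_of_nonneg_left h1 (by positivity)
        _ ≤ 8*(|α|+1)^2*((((m+1:ℕ):ℝ)+2)^2*(1/2)^(m+1)) := by
            push_cast
            have hle : ((m:ℝ)+2)*((m:ℝ)+1) ≤ 4*((m:ℝ)+3)^2 := by
              nlinarith [Nat.cast_nonneg (α := ℝ) m]
            have hnn : (0:ℝ) ≤ (|α|+1)^2 * (1/2)^m := by positivity
            calc ((m:ℝ)+2) * ((m:ℝ)+1) * ((|α|+1)^2 * (1/2)^m)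
                ≤ 4*((m:ℝ)+3)^2 * ((|α|+1)^2 * (1/2)^m) := by
                  have := mul_le_mul_of_nonneg_right hle hnn
                  linarith [this]
              _ = 8*(|α|+1)^2*(((m:ℝ)+1+2)^2*((1/2)^m*(1/2))) := by ring
              _ = 8*(|α|+1)^2*(((m:ℝ)+1+2)^2*(1/2)^(m+1)) := by ring
  have hg0 : Summable (fun n : ℕ => ((n:ℝ)+1) * cc α (n+1) * (0:ℝ)^n) :=
    sumD α (by rw [abs_zero, zero_mul]; norm_num)
  have hder := hasDerivAt_tsum_of_isPreconnected hu Metric.isOpen_ball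
    (convex_ball (0:ℝ) _).isPreconnected
    (fun n y _ => HasDerivAt.const_mul (((n:ℝ)+1) * cc α (n+1)) (hasDerivAt_pow n y))
    hbd (Metric.mem_ball_self (rK_pos α)) hg0 hx
  have e1 : ∑' n : ℕ, ((n:ℝ)+1) * cc α (n+1) * ((n:ℝ) * x^(n-1)) = Ef α x := by
      have hs : Summable (fun n : ℕ => ((n:ℝ)+1) * cc α (n+1) * ((n:ℝ) * x^(n-1))) := by
        apply Summable.of_norm_bounded hu (fun n => hbd n x hx)
      calc ∑' n : ℕ, ((n:ℝ)+1) * cc α (n+1) * ((n:ℝ) * x^(n-1))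
          = (((0:ℕ):ℝ)+1) * cc α (0+1) * (((0:ℕ):ℝ) * x^(0-1))
            + ∑' n : ℕ, (((n+1:ℕ):ℝ)+1) * cc α ((n+1)+1) * (((n+1:ℕ):ℝ) * x^((n+1)-1)) :=
            Summable.tsum_eq_zero_add hs
        _ = ∑' n : ℕ, ((n:ℝ)+1) * ((n:ℝ)+2) * cc α (n+2) * x^n := by
            rw [show (((0:ℕ):ℝ)+1) * cc α (0+1) * (((0:ℕ):ℝ) * x^(0-1)) = 0 by push_cast; ring,
              zero_add]
            exact tsum_congr fun n => by push_cast; ring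
        _ = Ef α x := rfl
  rw [← e1]
  exact hder

lemma Zf_pos {x : ℝ} (hx : |x| * (|α|+1) ≤ 1/8) : 1/2 ≤ Zf α x := by
  have hx2 : |x| * (|α|+1) ≤ 1/2 := le_trans hx (by norm_num)
  have hgeom : Summable (fun n : ℕ => ((1:ℝ)/8)^(n+1)) := by
    apply Summable.comp_injective _ (add_left_injective 1)
    exact summable_geometric_of_lt_one (by norm_num) (by norm_num)
  have htail : Summable (fun n : ℕ => cc α (n+1) * x^(n+1)) := by
    apply (sumZ α hx2).comp_injective (add_left_injective 1)
  have habs : |∑' n : ℕ, cc α (n+1) * x^(n+1)| ≤ 1/7 := by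
    have hbd : ∀ n : ℕ, |cc α (n+1) * x^(n+1)| ≤ ((1:ℝ)/8)^(n+1) := by
      intro n
      rw [abs_mul, abs_pow]
      calc |cc α (n+1)| * |x|^(n+1) ≤ (|α|+1)^(n+1) * |x|^(n+1) := by
            apply mul_le_mul_of_nonneg_right (cc_bound α (n+1)) (by positivity)
        _ = ((|α|+1) * |x|)^(n+1) := by rw [mul_pow]
        _ ≤ ((1:ℝ)/8)^(n+1) := by
            apply pow_le_pow_left₀ (by positivity) (by linarith [mul_comm (|α|+1) |x|])
    have h1 : |∑' n : ℕ, cc α (n+1) * x^(n+1)| ≤ ∑' n : ℕ, ((1:ℝ)/8)^(n+1) := by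
      calc |∑' n : ℕ, cc α (n+1) * x^(n+1)| ≤ ∑' n : ℕ, |cc α (n+1) * x^(n+1)| := by
            have := norm_tsum_le_tsum_norm (f := fun n : ℕ => cc α (n+1) * x^(n+1))
              (by simp only [Real.norm_eq_abs]; exact htail.abs)
            simp only [Real.norm_eq_abs] at this
            exact this
        _ ≤ ∑' n : ℕ, ((1:ℝ)/8)^(n+1) := Summable.tsum_le_tsum hbd (htail.abs) hgeom
    have h2 : ∑' n : ℕ, ((1:ℝ)/8)^(n+1) = 1/7 := by
      have : ∑' n : ℕ, ((1:ℝ)/8)^(n+1) = (1/8) * ∑' n : ℕ, ((1:ℝ)/8)^n := by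
        rw [← tsum_mul_left]
        exact tsum_congr fun n => by rw [pow_succ]; ring
      rw [this, tsum_geometric_of_lt_one (by norm_num) (by norm_num)]
      norm_num
    linarith
  have hsplit : Zf α x = cc α 0 * x^0 + ∑' n : ℕ, cc α (n+1) * x^(n+1) :=
    Summable.tsum_eq_zero_add (sumZ α hx2)
  rw [hsplit, cc_zero, pow_zero, mul_one]
  have := abs_le.1 habs
  linarith [this.1]

end Sums

noncomputable def eps (α : ℝ) : ℝ := (8*(|α|+1))⁻¹

noncomputable def aa (α : ℝ) (x : ℝ) : ℝ := x^2 + 4*α*x + 16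

noncomputable def gg (α : ℝ) (x : ℝ) : ℝ := (2*x*aa α x)⁻¹

noncomputable def G (α : ℝ) (x : ℝ) : ℝ := ∫ s in (eps α/2)..x, gg α s

lemma eps_pos (α : ℝ) : 0 < eps α := by rw [eps]; positivity

lemma eps_le (α : ℝ) : eps α ≤ 1/8 := by
  rw [eps]
  rw [show (1:ℝ)/8 = (8:ℝ)⁻¹ by norm_num]
  apply inv_anti₀ (by norm_num)
  nlinarith [abs_nonneg α]

lemma eps_mul (α : ℝ) : eps α * (|α|+1) = 1/8 := by
  rw [eps]; have : (0:ℝ) < |α|+1 := by positivity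
  field_simp

lemma aa_lb {α x : ℝ} (hx : 0 ≤ x) (hxe : x ≤ eps α) : 15 ≤ aa α x := by
  have h1 : |α| *x ≤ 1/8 := by
    have h2 : |α| *x ≤ (|α|+1)*x := by nlinarith
    have h3 : (|α|+1)*x ≤ (|α|+1)*eps α := by
      apply mul_le_mul_of_nonneg_left hxe (by positivity)
    calc |α| *x ≤ (|α|+1)*eps α := le_trans h2 h3
      _ = 1/8 := by rw [mul_comm]; exact eps_mul α
  have h7 : |α*x| = |α| * x := by rw [abs_mul, abs_of_nonneg hx]
  have h4 : -(4*α*x) ≤ 4*(|α| * x) := by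
    linarith [neg_abs_le (α*x), h7.le, h7.symm.le]
  rw [aa]; nlinarith [sq_nonneg x]

lemma aa_ub {α x : ℝ} (hx : 0 ≤ x) (hxe : x ≤ eps α) : aa α x ≤ 17 := by
  have h1 : |α| *x ≤ 1/8 := by
    have h2 : |α| *x ≤ (|α|+1)*x := by nlinarith
    have h3 : (|α|+1)*x ≤ (|α|+1)*eps α := by
      apply mul_le_mul_of_nonneg_left hxe (by positivity)
    calc |α| *x ≤ (|α|+1)*eps α := le_trans h2 h3
      _ = 1/8 := by rw [mul_comm]; exact eps_mul α
  have h7 : |α*x| = |α| * x := by rw [abs_mul, abs_of_nonneg hx]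
  have h4 : 4*α*x ≤ 4*(|α| * x) := by
    linarith [le_abs_self (α*x), h7.le, h7.symm.le]
  have hx1 : x ≤ 1/8 := le_trans hxe (eps_le α)
  have hsq : x^2 ≤ 1/64 := by nlinarith
  rw [aa]; linarith

lemma gg_pos {α x : ℝ} (hx : 0 < x) (hxe : x ≤ eps α) : 0 < gg α x := by
  rw [gg]
  have := aa_lb (le_of_lt hx) hxe
  positivity

lemma gg_ne {α x : ℝ} (hx : 0 < x) (hxe : x ≤ eps α) : 2*x*aa α x ≠ 0 := by
  have := aa_lb (le_of_lt hx) hxe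
  positivity

lemma gg_contOn (α : ℝ) : ContinuousOn (gg α) (Ioo 0 (eps α)) := by
  show ContinuousOn (fun x => (2*x*aa α x)⁻¹) (Ioo 0 (eps α))
  simp only [aa]
  apply ContinuousOn.inv₀
  · fun_prop
  · intro x hx
    have := gg_ne hx.1 hx.2.le
    simpa [aa] using this

lemma gg_intble {α : ℝ} {p q : ℝ} (hp : p ∈ Ioo 0 (eps α)) (hq : q ∈ Ioo 0 (eps α)) :
    IntervalIntegrable (gg α) MeasureTheory.volume p q := by
  apply ContinuousOn.intervalIntegrable
  apply (gg_contOn α).mono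
  exact (ordConnected_Ioo).uIcc_subset hp hq

lemma G_deriv {α x : ℝ} (hx : x ∈ Ioo 0 (eps α)) : HasDerivAt (G α) (gg α x) x := by
  apply intervalIntegral.integral_hasDerivAt_right
  · exact gg_intble (by constructor <;> [linarith [eps_pos α]; linarith [eps_pos α]] : (eps α/2) ∈ Ioo 0 (eps α)) hx
  · exact (gg_contOn α).stronglyMeasurableAtFilter isOpen_Ioo x hx
  · exact (gg_contOn α).continuousAt (isOpen_Ioo.mem_nhds hx)

lemma G_strictMono (α : ℝ) : StrictMonoOn (G α) (Ioo 0 (eps α)) := by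
  intro p hp q hq hpq
  have key : G α q - G α p = ∫ s in p..q, gg α s := by
    rw [G, G]
    rw [← intervalIntegral.integral_add_adjacent_intervals
      (gg_intble (by constructor <;> [linarith [eps_pos α]; linarith [eps_pos α]]) hp)
      (gg_intble hp hq)]
    ring
  have hpos : 0 < ∫ s in p..q, gg α s := by
    apply intervalIntegral.intervalIntegral_pos_of_pos_on (gg_intble hp hq)
    · intro s hs
      exact gg_pos (lt_trans hp.1 hs.1) (le_of_lt (lt_trans hs.2 hq.2))
    · exact hpq
  linarith

lemma G_eps2 (α : ℝ) : G α (eps α/2) = 0 := intervalIntegral.integral_same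

lemma G_small {α : ℝ} (t : ℝ) (ht : t < 0) :
    ∃ x, x ∈ Ioo 0 (eps α/2) ∧ G α x < t := by
  set c := eps α/2 with hc
  have hc_pos : 0 < c := by rw [hc]; linarith [eps_pos α]
  set u := c * Real.exp (36*t - 1) with hu
  have hexp : Real.exp (36*t - 1) < 1 := by
    rw [Real.exp_lt_one_iff]; linarith
  have hu_pos : 0 < u := by positivity
  have hu_lt : u < c := by
    calc u = c * Real.exp (36*t-1) := hu
      _ < c * 1 := by apply mul_lt_mul_of_pos_left hexp hc_pos
      _ = c := mul_one c
  refine ⟨u, ⟨hu_pos, hu_lt⟩, ?_⟩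
  have hmemu : u ∈ Ioo 0 (eps α) := ⟨hu_pos, by linarith [eps_pos α]⟩
  have hmemc : c ∈ Ioo 0 (eps α) := ⟨hc_pos, by linarith [eps_pos α]⟩
  have key : G α u = - ∫ s in u..c, gg α s := by
    rw [G, ← hc, intervalIntegral.integral_symm]
  have hcomp : ∫ s in u..c, (36*s)⁻¹ ≤ ∫ s in u..c, gg α s := by
    apply intervalIntegral.integral_mono_on hu_lt.le
    · apply ContinuousOn.intervalIntegrable
      apply ContinuousOn.inv₀ (by fun_prop)
      intro s hs
      rw [uIcc_of_le hu_lt.le] at hs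
      have : 0 < s := lt_of_lt_of_le hu_pos hs.1
      positivity
    · exact gg_intble hmemu hmemc
    · intro s hs
      have hs0 : 0 < s := lt_of_lt_of_le hu_pos hs.1
      have hse : s ≤ eps α := le_trans hs.2 (by linarith [eps_pos α])
      rw [gg]
      have hlb := aa_lb hs0.le hse
      have hub := aa_ub hs0.le hse
      apply inv_anti₀ (by nlinarith)
      nlinarith
  have hval : (∫ s in u..c, (36*s)⁻¹) = (36:ℝ)⁻¹ * Real.log (c/u) := by
    simp only [mul_inv]
    rw [intervalIntegral.integral_const_mul]
    rw [integral_inv_of_pos hu_pos hc_pos]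
  have hcu : Real.log (c/u) = -(36*t-1) := by
    have : c/u = Real.exp (-(36*t-1)) := by
      rw [hu, Real.exp_neg]
      rw [eq_comm, inv_eq_iff_eq_inv, eq_comm]
      field_simp
    rw [this, Real.log_exp]
  rw [key]
  rw [hval, hcu] at hcomp
  linarith


lemma half_mem (α : ℝ) : eps α/2 ∈ Ioo 0 (eps α) :=
  ⟨by linarith [eps_pos α], by linarith [eps_pos α]⟩

lemma sub_mem {α : ℝ} {x : ℝ} (hx : x ∈ Ioo 0 (eps α/2)) : x ∈ Ioo 0 (eps α) :=
  ⟨hx.1, by linarith [hx.2, eps_pos α]⟩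

lemma uf_exists {α t : ℝ} (ht : t < 0) : ∃ x, x ∈ Ioo 0 (eps α/2) ∧ G α x = t := by
  obtain ⟨u, hu, hGu⟩ := G_small (α := α) t ht
  have hcont : ContinuousOn (G α) (Icc u (eps α/2)) := by
    intro x hx
    have hxm : x ∈ Ioo 0 (eps α) :=
      ⟨lt_of_lt_of_le hu.1 hx.1, lt_of_le_of_lt hx.2 (half_mem α).2⟩
    exact (G_deriv hxm).continuousAt.continuousWithinAt
  have hsub := intermediate_value_Ico (le_of_lt hu.2) hcont
  have htm : t ∈ Ico (G α u) (G α (eps α/2)) := by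
    rw [G_eps2]
    exact ⟨hGu.le, ht⟩
  obtain ⟨x, hx, hGx⟩ := hsub htm
  exact ⟨x, ⟨lt_of_lt_of_le hu.1 hx.1, hx.2⟩, hGx⟩

open Classical in
noncomputable def uf (α : ℝ) (t : ℝ) : ℝ :=
  if h : ∃ x, x ∈ Ioo 0 (eps α/2) ∧ G α x = t then h.choose else eps α/2

lemma uf_spec {α t : ℝ} (ht : t < 0) :
    uf α t ∈ Ioo 0 (eps α/2) ∧ G α (uf α t) = t := by
  rw [uf]
  rw [dif_pos (uf_exists ht)]
  exact (uf_exists ht).choose_spec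

lemma uf_lt_iff {α t x : ℝ} (ht : t < 0) (hx : x ∈ Ioo 0 (eps α)) :
    uf α t < x ↔ t < G α x := by
  constructor
  · intro h
    have := ((G_strictMono α).lt_iff_lt (sub_mem (uf_spec ht).1) hx).2 h
    rwa [(uf_spec ht).2] at this
  · intro h
    apply ((G_strictMono α).lt_iff_lt (sub_mem (uf_spec ht).1) hx).1
    rw [(uf_spec ht).2]
    exact h

lemma lt_uf_iff {α t x : ℝ} (ht : t < 0) (hx : x ∈ Ioo 0 (eps α)) :
    x < uf α t ↔ G α x < t := by
  constructor
  · intro h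
    have := ((G_strictMono α).lt_iff_lt hx (sub_mem (uf_spec ht).1)).2 h
    rwa [(uf_spec ht).2] at this
  · intro h
    apply ((G_strictMono α).lt_iff_lt hx (sub_mem (uf_spec ht).1)).1
    rw [(uf_spec ht).2]
    exact h

lemma uf_continuousAt {α t : ℝ} (ht : t < 0) : ContinuousAt (uf α) t := by
  rw [ContinuousAt]
  apply tendsto_order.2
  constructor
  · intro b hb
    by_cases hb0 : b ≤ 0
    · filter_upwards [Iio_mem_nhds ht] with s hs
      exact lt_of_le_of_lt hb0 (uf_spec hs).1.1
    · push_neg at hb0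
      have hbm : b ∈ Ioo 0 (eps α) :=
        ⟨hb0, lt_trans (lt_trans hb (uf_spec ht).1.2) (half_mem α).2⟩
      have hGb : G α b < t := (lt_uf_iff ht hbm).1 hb
      filter_upwards [Iio_mem_nhds ht, Ioi_mem_nhds hGb] with s hs1 hs2
      exact (lt_uf_iff hs1 hbm).2 hs2
  · intro b hb
    by_cases hbe : eps α/2 ≤ b
    · filter_upwards [Iio_mem_nhds ht] with s hs
      exact lt_of_lt_of_le (uf_spec hs).1.2 hbe
    · push_neg at hbe
      have hbm : b ∈ Ioo 0 (eps α) :=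
        ⟨lt_trans (uf_spec ht).1.1 hb, lt_trans hbe (half_mem α).2⟩
      have hGb : t < G α b := (uf_lt_iff ht hbm).1 hb
      filter_upwards [Iio_mem_nhds ht, Iio_mem_nhds hGb] with s hs1 hs2
      exact (uf_lt_iff hs1 hbm).2 hs2

lemma uf_hasDerivAt {α t : ℝ} (ht : t < 0) :
    HasDerivAt (uf α) (2 * uf α t * aa α (uf α t)) t := by
  have hx := (uf_spec (α := α) ht).1
  have hxm : uf α t ∈ Ioo 0 (eps α) := sub_mem hx
  have hne : gg α (uf α t) ≠ 0 := (gg_pos hxm.1 hxm.2.le).ne'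
  have h := HasDerivAt.of_local_left_inverse (uf_continuousAt ht)
    (G_deriv hxm) hne ?_
  · have : (gg α (uf α t))⁻¹ = 2 * uf α t * aa α (uf α t) := by
      rw [gg, inv_inv]
    rwa [this] at h
  · filter_upwards [Iio_mem_nhds ht] with s hs
    exact (uf_spec hs).2

lemma uf_tendsto (α : ℝ) : Tendsto (uf α) atBot (nhds 0) := by
  apply tendsto_order.2
  constructor
  · intro b hb
    filter_upwards [eventually_lt_atBot (0:ℝ)] with s hs
    exact lt_trans hb (uf_spec hs).1.1
  · intro b hb
    by_cases hbe : eps α/2 ≤ b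
    · filter_upwards [eventually_lt_atBot (0:ℝ)] with s hs
      exact lt_of_lt_of_le (uf_spec hs).1.2 hbe
    · push_neg at hbe
      have hbm : b ∈ Ioo 0 (eps α) := ⟨hb, lt_trans hbe (half_mem α).2⟩
      filter_upwards [eventually_lt_atBot (min (G α b) 0)] with s hs
      have hs0 : s < 0 := lt_of_lt_of_le hs (min_le_right _ _)
      have hsG : s < G α b := lt_of_lt_of_le hs (min_le_left _ _)
      exact (uf_lt_iff hs0 hbm).2 hsG



lemma uf_eighth {α t : ℝ} (ht : t < 0) : |uf α t| * (|α|+1) ≤ 1/8 := by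
  have hx := (uf_spec (α := α) ht).1
  have h1 : |uf α t| = uf α t := abs_of_pos hx.1
  rw [h1]
  have h2 : uf α t ≤ eps α := by linarith [hx.2, eps_pos α]
  calc uf α t * (|α|+1) ≤ eps α * (|α|+1) := by
        apply mul_le_mul_of_nonneg_right h2 (by positivity)
    _ = 1/8 := eps_mul α

lemma uf_half {α t : ℝ} (ht : t < 0) : |uf α t| * (|α|+1) ≤ 1/2 :=
  le_trans (uf_eighth ht) (by norm_num)

lemma uf_ball {α t : ℝ} (ht : t < 0) : uf α t ∈ Metric.ball (0:ℝ) (2*(|α|+1))⁻¹ := by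
  rw [Metric.mem_ball, Real.dist_eq, sub_zero]
  have h8 := uf_eighth (α := α) ht
  have hK : (0:ℝ) < |α|+1 := by positivity
  have h1 : |uf α t| ≤ (8*(|α|+1))⁻¹ := by
    rw [show (8*(|α|+1))⁻¹ = 1/(8*(|α|+1)) by rw [one_div]]
    rw [le_div_iff₀ (by positivity)]
    nlinarith [h8]
  have h2 : (8*(|α|+1))⁻¹ < (2*(|α|+1))⁻¹ := by
    apply inv_strictAnti₀ (by positivity)
    linarith
  linarith

lemma uf_Zpos {α t : ℝ} (ht : t < 0) : 1/2 ≤ Zf α (uf α t) :=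
  Zf_pos α (uf_eighth ht)

lemma uf_Zne {α t : ℝ} (ht : t < 0) : Zf α (uf α t) ≠ 0 := by
  linarith [uf_Zpos (α := α) ht]


end Stmt5

open Stmt5 in
/-- Existence of the Wente Whitham flow emerging from the degenerate spectral
curve: for every `α ∈ ℝ` there are `T ∈ (−∞, ∞]` and a solution
`(a₊, a₋, β₂, β₃)` of the Whitham ODE system on `(−∞, T)` with `a₊ > 0`,
`a₋ = a₊ + 4α√a₊ + 16`, and `(a₊, a₋, β₂, β₃) → (0, 16, 1, −4)` as `t → −∞`. -/
theorem stmt_5 (α : ℝ) :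
    ∃ T : EReal, ⊥ < T ∧ ∃ ap am β₂ β₃ : ℝ → ℝ,
      (∀ t : ℝ, (t : EReal) < T → 0 < ap t) ∧
      (∀ t : ℝ, (t : EReal) < T → HasDerivAt ap (4 * ap t * am t) t) ∧
      (∀ t : ℝ, (t : EReal) < T →
        HasDerivAt am (2 * (ap t + am t - 16) * am t) t) ∧
      (∀ t : ℝ, (t : EReal) < T →
        HasDerivAt β₂ (-(am t + 4 * β₃ t) * β₂ t) t) ∧
      (∀ t : ℝ, (t : EReal) < T →
        HasDerivAt β₃ (4 * β₃ t ^ 2 + 2 * am t * β₃ t + 4 * am t) t) ∧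
      (∀ t : ℝ, (t : EReal) < T →
        am t = ap t + 4 * α * Real.sqrt (ap t) + 16) ∧
      Tendsto ap atBot (nhds 0) ∧
      Tendsto am atBot (nhds 16) ∧
      Tendsto β₂ atBot (nhds 1) ∧
      Tendsto β₃ atBot (nhds (-4)) := by
  refine ⟨((0:ℝ) : EReal), by exact bot_lt_iff_ne_bot.2 (by simp),
    (fun t => (uf α t)^2), (fun t => aa α (uf α t)), (fun t => Zf α (uf α t)),
    (fun t => -(aa α (uf α t))/4
      - uf α t * aa α (uf α t) * Df α (uf α t) / (2 * Zf α (uf α t))),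
    ?_, ?_, ?_, ?_, ?_, ?_, ?_, ?_, ?_, ?_⟩
  -- positivity of `a₊`
  · intro t ht
    rw [EReal.coe_lt_coe_iff] at ht
    exact pow_pos (uf_spec ht).1.1 2
  -- ODE for `a₊`
  · intro t ht
    rw [EReal.coe_lt_coe_iff] at ht
    have hu := uf_hasDerivAt (α := α) ht
    refine (hu.pow 2).congr_deriv ?_
    norm_num [aa]
    ring
  -- ODE for `a₋`
  · intro t ht
    rw [EReal.coe_lt_coe_iff] at ht
    have hu := uf_hasDerivAt (α := α) ht
    have h := ((hu.pow 2).add (hu.const_mul (4*α))).add_const 16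
    refine h.congr_deriv ?_
    norm_num [aa]
    ring
  -- ODE for `β₂`
  · intro t ht
    rw [EReal.coe_lt_coe_iff] at ht
    have hu := uf_hasDerivAt (α := α) ht
    have h := (hasDerivAt_Zf α (uf_ball ht)).comp t hu
    refine h.congr_deriv ?_
    have hZ := uf_Zne (α := α) ht
    field_simp
    ring
  -- ODE for `β₃`
  · intro t ht
    rw [EReal.coe_lt_coe_iff] at ht
    have hu := uf_hasDerivAt (α := α) ht
    set x := uf α t with hxdef
    have hZx := hasDerivAt_Zf α (uf_ball ht)
    have hDx := hasDerivAt_Df α (uf_ball ht)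
    have haa : HasDerivAt (aa α) (2*x + 4*α) x := by
      have h := ((hasDerivAt_pow 2 x).add ((hasDerivAt_id x).const_mul (4*α))).add_const 16
      refine h.congr_deriv ?_
      norm_num
    have hP : HasDerivAt (fun y => y * aa α y * Df α y)
        (((1 * aa α x + x * (2*x + 4*α)) * Df α x) + x * aa α x * Ef α x) x :=
      ((hasDerivAt_id x).mul haa).mul hDx
    have hQ : HasDerivAt (fun y => 2 * Zf α y) (2 * Df α x) x := hZx.const_mul 2
    have hne2 : 2 * Zf α x ≠ 0 :=
      mul_ne_zero two_ne_zero (uf_Zne ht)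
    have hdiv := hP.div hQ hne2
    have hF := ((haa.neg).div_const 4).sub hdiv
    have hB3 := hF.comp t hu
    refine hB3.congr_deriv ?_
    beta_reduce
    rw [← hxdef]
    have hid := main_identity α (uf_half ht)
    have hZ : Zf α x ≠ 0 := uf_Zne ht
    have hxpos : 0 < x := (uf_spec ht).1.1
    have hxeps : x ≤ eps α := by
      have := (uf_spec (α := α) ht).1.2
      have h2 := eps_pos α
      rw [← hxdef] at this
      linarith
    have hAlb : (15:ℝ) ≤ aa α x := aa_lb hxpos.le hxeps
    have hA : x^2 + 4*α*x + 16 ≠ 0 := by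
      have : aa α x = x^2+4*α*x+16 := rfl
      linarith [hAlb, this.symm.le, this.le]
    have hden : 4*x*(x^2+4*α*x+16) ≠ 0 := by
      apply mul_ne_zero (by positivity) hA
    have hE : Ef α x = (-((12*x^2+32*α*x+64) * Df α x) - (3*x+4*α) * Zf α x)
        / (4*x*(x^2+4*α*x+16)) := by
      rw [eq_div_iff hden]
      linarith [hid]
    simp only [aa]
    rw [hE]
    have hA' : x*(x+4*α)+16 ≠ 0 := by convert hA using 1; ring
    field_simp
    ring
  -- the constraint
  · intro t ht
    rw [EReal.coe_lt_coe_iff] at ht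
    rw [Real.sqrt_sq (uf_spec ht).1.1.le]
    simp [aa]
  -- limit of `a₊`
  · have h2 : Tendsto (fun x : ℝ => x^2) (nhds 0) (nhds 0) := by
      have := (continuous_pow 2 (M := ℝ)).tendsto 0
      simpa using this
    exact h2.comp (uf_tendsto α)
  -- limit of `a₋`
  · have hca : Continuous (aa α) := by
      unfold aa; fun_prop
    have h := (hca.tendsto 0).comp (uf_tendsto α)
    have e : aa α 0 = 16 := by simp [aa]
    rwa [e] at h
  -- limit of `β₂`
  · have hc := (hasDerivAt_Zf α (Metric.mem_ball_self (rK_pos α))).continuousAt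
    have h := hc.tendsto.comp (uf_tendsto α)
    rwa [Zf_zero] at h
  -- limit of `β₃`
  · have hZc := (hasDerivAt_Zf α (Metric.mem_ball_self (rK_pos α))).continuousAt
    have hDc := (hasDerivAt_Df α (Metric.mem_ball_self (rK_pos α))).continuousAt
    have haac : ContinuousAt (aa α) 0 := by
      have : Continuous (aa α) := by unfold aa; fun_prop
      exact this.continuousAt
    have hF : ContinuousAt (fun x => -(aa α x)/4 - x * aa α x * Df α x / (2 * Zf α x)) 0 := by
      apply ContinuousAt.sub
      · exact (haac.neg).div_const 4
      · apply ContinuousAt.div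
        · exact (continuousAt_id.mul haac).mul hDc
        · exact hZc.const_mul 2
        · rw [Zf_zero]; norm_num
    have h := hF.tendsto.comp (uf_tendsto α)
    have e : -(aa α 0)/4 - 0 * aa α 0 * Df α 0 / (2 * Zf α 0) = -4 := by
      norm_num [aa, Zf_zero]
    rwa [e] at h
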